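/- Let σ_1, σ_2, σ_3 be the Pauli matrices and λ_1, λ_2, λ_3 ∈ ℝ. Define the linear map ℰ : M_2(ℂ) → M_2(ℂ) by ℰ(w_0 I + w_1 σ_1 + w_2 σ_2 + w_3 σ_3) = w_0 I + λ_1 w_1 σ_1 + λ_2 w_2 σ_2 + λ_3 w_3 σ_3. Then ℰ is completely positive if and only if 1 + λ_3 ≥ |λ_1 + λ_2| and 1 − λ_3 ≥ |λ_1 − λ_2|. -/

import Mathlib

open Matrix BigOperators
open scoped Kronecker ComplexOrder

noncomputable def σ₁ : Matrix (Fin 2) (Fin 2) ℂ := !![0, 1; 1, 0]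
noncomputable def σ₂ : Matrix (Fin 2) (Fin 2) ℂ := !![0, -Complex.I; Complex.I, 0]
noncomputable def σ₃ : Matrix (Fin 2) (Fin 2) ℂ := !![1, 0; 0, -1]

/-- The Choi matrix of a map Φ : M_2(ℂ) → M_2(ℂ). -/
noncomputable def choiMatrix
    (Φ : Matrix (Fin 2) (Fin 2) ℂ → Matrix (Fin 2) (Fin 2) ℂ) :
    Matrix (Fin 2 × Fin 2) (Fin 2 × Fin 2) ℂ :=
  ∑ i : Fin 2, ∑ j : Fin 2,
    Φ (Matrix.single i j (1 : ℂ)) ⊗ₖ Matrix.single i j (1 : ℂ)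

/-- Complete positivity via Choi's theorem. -/
noncomputable def IsCompletelyPositive
    (Φ : Matrix (Fin 2) (Fin 2) ℂ → Matrix (Fin 2) (Fin 2) ℂ) : Prop :=
  (choiMatrix Φ).PosSemidef

set_option maxHeartbeats 2000000 in
/-- The qubit Pauli channel ℰ (fixing I and scaling σ_k by λ_k) is completely
positive iff 1 + λ₃ ≥ |λ₁ + λ₂| and 1 − λ₃ ≥ |λ₁ − λ₂|. -/
theorem pauliChannel_completelyPositive_iff (l₁ l₂ l₃ : ℝ)
    (ℰ : Matrix (Fin 2) (Fin 2) ℂ →ₗ[ℂ] Matrix (Fin 2) (Fin 2) ℂ)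
    (h0 : ℰ 1 = 1)
    (h1 : ℰ σ₁ = (l₁ : ℂ) • σ₁)
    (h2 : ℰ σ₂ = (l₂ : ℂ) • σ₂)
    (h3 : ℰ σ₃ = (l₃ : ℂ) • σ₃) :
    IsCompletelyPositive ℰ ↔ (|l₁ + l₂| ≤ 1 + l₃ ∧ |l₁ - l₂| ≤ 1 - l₃) := by
  -- Express the standard basis matrices in terms of the Pauli matrices.
  have e00 : Matrix.single (0:Fin 2) 0 (1:ℂ) = (2:ℂ)⁻¹ • (1 + σ₃) := by
    ext i j; fin_cases i <;> fin_cases j <;>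
      simp [σ₃, Matrix.single, Matrix.one_apply] <;> norm_num
  have e11 : Matrix.single (1:Fin 2) 1 (1:ℂ) = (2:ℂ)⁻¹ • (1 - σ₃) := by
    ext i j; fin_cases i <;> fin_cases j <;>
      simp [σ₃, Matrix.single, Matrix.one_apply] <;> norm_num
  have e01 : Matrix.single (0:Fin 2) 1 (1:ℂ) = (2:ℂ)⁻¹ • (σ₁ + Complex.I • σ₂) := by
    ext i j; fin_cases i <;> fin_cases j <;>
      simp [σ₁, σ₂, Matrix.single] <;> norm_num [Complex.ext_iff]
  have e10 : Matrix.single (1:Fin 2) 0 (1:ℂ) = (2:ℂ)⁻¹ • (σ₁ - Complex.I • σ₂) := by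
    ext i j; fin_cases i <;> fin_cases j <;>
      simp [σ₁, σ₂, Matrix.single] <;> norm_num [Complex.ext_iff]
  -- Compute ℰ on the standard basis matrices.
  have hE00 : ℰ (Matrix.single (0:Fin 2) 0 (1:ℂ)) =
      !![(1+(l₃:ℂ))/2, 0; 0, (1-(l₃:ℂ))/2] := by
    rw [e00, _root_.map_smul, map_add, h0, h3]
    ext i j; fin_cases i <;> fin_cases j <;> simp [σ₃, Matrix.one_apply] <;> ring
  have hE11 : ℰ (Matrix.single (1:Fin 2) 1 (1:ℂ)) =
      !![(1-(l₃:ℂ))/2, 0; 0, (1+(l₃:ℂ))/2] := by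
    rw [e11, _root_.map_smul, map_sub, h0, h3]
    ext i j; fin_cases i <;> fin_cases j <;> simp [σ₃, Matrix.one_apply] <;> ring
  have hE01 : ℰ (Matrix.single (0:Fin 2) 1 (1:ℂ)) =
      !![0, ((l₁:ℂ)+l₂)/2; ((l₁:ℂ)-l₂)/2, 0] := by
    rw [e01, _root_.map_smul, map_add, _root_.map_smul, h1, h2]
    ext i j; fin_cases i <;> fin_cases j <;>
      simp [σ₁, σ₂] <;> norm_num [Complex.ext_iff] <;> ring
  have hE10 : ℰ (Matrix.single (1:Fin 2) 0 (1:ℂ)) =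
      !![0, ((l₁:ℂ)-l₂)/2; ((l₁:ℂ)+l₂)/2, 0] := by
    rw [e10, _root_.map_smul, map_sub, _root_.map_smul, h1, h2]
    ext i j; fin_cases i <;> fin_cases j <;>
      simp [σ₁, σ₂] <;> norm_num [Complex.ext_iff] <;> ring
  -- The Choi matrix entrywise.
  have choi_apply : ∀ a b c d : Fin 2, choiMatrix ℰ (a,b) (c,d) =
      (![![!![(1+(l₃:ℂ))/2, 0; 0, (1-(l₃:ℂ))/2], !![0, ((l₁:ℂ)+l₂)/2; ((l₁:ℂ)-l₂)/2, 0]],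
         ![!![0, ((l₁:ℂ)-l₂)/2; ((l₁:ℂ)+l₂)/2, 0], !![(1-(l₃:ℂ))/2, 0; 0, (1+(l₃:ℂ))/2]]] b d)
        a c := by
    intro a b c d
    fin_cases b <;> fin_cases d <;>
      · simp only [choiMatrix, Matrix.sum_apply, Fin.sum_univ_two,
          Matrix.kroneckerMap_apply, hE00, hE01, hE10, hE11]
        fin_cases a <;> fin_cases c <;>
          simp [Matrix.single]
  constructor
  · intro hC
    refine ⟨abs_le.mpr ⟨?_, ?_⟩, abs_le.mpr ⟨?_, ?_⟩⟩
    · have := hC.dotProduct_mulVec_nonneg (fun q => if q = (0,0) then 1 else if q = (1,1) then 1 else 0)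
      rw [show (star (fun q => if q = ((0:Fin 2),(0:Fin 2)) then (1:ℂ)
            else if q = (1,1) then 1 else 0) ⬝ᵥ
          choiMatrix ℰ *ᵥ (fun q => if q = (0,0) then 1 else if q = (1,1) then 1 else 0)) =
          (((1 + l₃) + (l₁ + l₂) : ℝ) : ℂ) from by
        simp [dotProduct, Matrix.mulVec, Fintype.sum_prod_type, Fin.sum_univ_two, choi_apply,
          Prod.ext_iff]
        push_cast; ring] at this
      have := Complex.zero_le_real.mp this
      linarith
    · have := hC.dotProduct_mulVec_nonneg (fun q => if q = (0,0) then 1 else if q = (1,1) then -1 else 0)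
      rw [show (star (fun q => if q = ((0:Fin 2),(0:Fin 2)) then (1:ℂ)
            else if q = (1,1) then -1 else 0) ⬝ᵥ
          choiMatrix ℰ *ᵥ (fun q => if q = (0,0) then 1 else if q = (1,1) then -1 else 0)) =
          (((1 + l₃) - (l₁ + l₂) : ℝ) : ℂ) from by
        simp [dotProduct, Matrix.mulVec, Fintype.sum_prod_type, Fin.sum_univ_two, choi_apply,
          Prod.ext_iff]
        push_cast; ring] at this
      have := Complex.zero_le_real.mp this
      linarith
    · have := hC.dotProduct_mulVec_nonneg (fun q => if q = (0,1) then 1 else if q = (1,0) then 1 else 0)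
      rw [show (star (fun q => if q = ((0:Fin 2),(1:Fin 2)) then (1:ℂ)
            else if q = (1,0) then 1 else 0) ⬝ᵥ
          choiMatrix ℰ *ᵥ (fun q => if q = (0,1) then 1 else if q = (1,0) then 1 else 0)) =
          (((1 - l₃) + (l₁ - l₂) : ℝ) : ℂ) from by
        simp [dotProduct, Matrix.mulVec, Fintype.sum_prod_type, Fin.sum_univ_two, choi_apply,
          Prod.ext_iff]
        push_cast; ring] at this
      have := Complex.zero_le_real.mp this
      linarith
    · have := hC.dotProduct_mulVec_nonneg (fun q => if q = (0,1) then 1 else if q = (1,0) then -1 else 0)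
      rw [show (star (fun q => if q = ((0:Fin 2),(1:Fin 2)) then (1:ℂ)
            else if q = (1,0) then -1 else 0) ⬝ᵥ
          choiMatrix ℰ *ᵥ (fun q => if q = (0,1) then 1 else if q = (1,0) then -1 else 0)) =
          (((1 - l₃) - (l₁ - l₂) : ℝ) : ℂ) from by
        simp [dotProduct, Matrix.mulVec, Fintype.sum_prod_type, Fin.sum_univ_two, choi_apply,
          Prod.ext_iff]
        push_cast; ring] at this
      have := Complex.zero_le_real.mp this
      linarith
  · rintro ⟨ha, hb⟩
    obtain ⟨ha1, ha2⟩ := abs_le.mp ha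
    obtain ⟨hb1, hb2⟩ := abs_le.mp hb
    set t₁ := Real.sqrt (1 + l₃ + (l₁ + l₂)) / 2 with ht₁
    set t₂ := Real.sqrt (1 + l₃ - (l₁ + l₂)) / 2 with ht₂
    set t₃ := Real.sqrt (1 - l₃ + (l₁ - l₂)) / 2 with ht₃
    set t₄ := Real.sqrt (1 - l₃ - (l₁ - l₂)) / 2 with ht₄
    have sq : ∀ r : ℝ, 0 ≤ r →
        ((Real.sqrt r / 2 : ℝ) : ℂ) * ((Real.sqrt r / 2 : ℝ) : ℂ) = (r : ℂ) / 4 := by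
      intro r hr
      rw [← Complex.ofReal_mul, div_mul_div_comm, Real.mul_self_sqrt hr]
      push_cast; ring
    have s1 := sq _ (by linarith : (0:ℝ) ≤ 1 + l₃ + (l₁ + l₂))
    have s2 := sq _ (by linarith : (0:ℝ) ≤ 1 + l₃ - (l₁ + l₂))
    have s3 := sq _ (by linarith : (0:ℝ) ≤ 1 - l₃ + (l₁ - l₂))
    have s4 := sq _ (by linarith : (0:ℝ) ≤ 1 - l₃ - (l₁ - l₂))
    set B : Matrix (Fin 4) (Fin 2 × Fin 2) ℂ := Matrix.of fun i q =>
      (![![((t₁:ℂ)), ((t₂:ℂ)), 0, 0], ![0, 0, ((t₃:ℂ)), ((t₄:ℂ))],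
         ![0, 0, ((t₃:ℂ)), (-(t₄:ℂ))], ![((t₁:ℂ)), (-(t₂:ℂ)), 0, 0]]
        (⟨(q.1 : ℕ) * 2 + (q.2 : ℕ), by have := q.1.isLt; have := q.2.isLt; omega⟩ : Fin 4) i) with hB
    have hfact : choiMatrix ℰ = Bᴴ * B := by
      have u1 : ((t₁:ℂ)) * ((t₁:ℂ)) = ((1 + l₃ + (l₁ + l₂) : ℝ) : ℂ) / 4 := by exact s1
      have u2 : ((t₂:ℂ)) * ((t₂:ℂ)) = ((1 + l₃ - (l₁ + l₂) : ℝ) : ℂ) / 4 := by exact s2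
      have u3 : ((t₃:ℂ)) * ((t₃:ℂ)) = ((1 - l₃ + (l₁ - l₂) : ℝ) : ℂ) / 4 := by exact s3
      have u4 : ((t₄:ℂ)) * ((t₄:ℂ)) = ((1 - l₃ - (l₁ - l₂) : ℝ) : ℂ) / 4 := by exact s4
      clear_value t₁ t₂ t₃ t₄
      ext ⟨a,b⟩ ⟨c,d⟩
      rw [choi_apply]
      fin_cases a <;> fin_cases b <;> fin_cases c <;> fin_cases d <;>
        simp [hB, Matrix.mul_apply, Fin.sum_univ_four, Complex.conj_ofReal,
          u1, u2, u3, u4] <;> ring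
    show (choiMatrix ℰ).PosSemidef
    rw [hfact]
    exact Matrix.posSemidef_conjTranspose_mul_self B
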